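/- Let a be a unimodal configuration from which a PSSPM transition with a choice at the peak column i is possible (i.e., a_{i-1} + 2 ≤ a_i and a_i ≥ a_{i+1} + 2). Let L(a) be the result of the parallel step choosing the left rule at i, and R(a) the result choosing the right rule at i (all other columns fire identically). Then R(a) ◁* L(a); in fact the difference R(a) − L(a) is −1 at position i−1, +1 at position i+1, and 0 elsewhere. -/

import Mathlib

/-- Initial configuration: `n` grains at position 0. -/
def initConf (n : ℕ) : ℤ → ℕ := fun i => if i = 0 then n else 0

/-- Move one grain from column `i` to column `j`. -/
def moveGrain (a : ℤ → ℕ) (i j : ℤ) : ℤ → ℕ :=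
  fun k => if k = i then a k - 1 else if k = j then a k + 1 else a k

/-- One sequential SSPM step. -/
def sspmStep (a b : ℤ → ℕ) : Prop :=
  ∃ i : ℤ, (a (i + 1) + 2 ≤ a i ∧ b = moveGrain a i (i + 1)) ∨
           (a (i - 1) + 2 ≤ a i ∧ b = moveGrain a i (i - 1))

/-- Left rule applicable at column `i`. -/
def appL (a : ℤ → ℕ) (i : ℤ) : Prop := a (i - 1) + 2 ≤ a i

/-- Right rule applicable at column `i`. -/
def appR (a : ℤ → ℕ) (i : ℤ) : Prop := a (i + 1) + 2 ≤ a i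

/-- A choice function for a parallel step: `some false` = fire left,
`some true` = fire right, `none` = not fired.  Every column on which some
rule applies must fire. -/
def ValidChoice (a : ℤ → ℕ) (d : ℤ → Option Bool) : Prop :=
  ∀ i : ℤ, (d i = some false → appL a i) ∧ (d i = some true → appR a i) ∧
    (d i = none → ¬ appL a i ∧ ¬ appR a i)

/-- The configuration resulting from firing all columns according to `d`. -/
def psspmResult (a : ℤ → ℕ) (d : ℤ → Option Bool) : ℤ → ℕ :=
  fun i => (a i - (if d i = none then 0 else 1))
    + (if d (i - 1) = some true then 1 else 0)
    + (if d (i + 1) = some false then 1 else 0)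

/-- One parallel PSSPM step. -/
def psspmStep (a b : ℤ → ℕ) : Prop :=
  ∃ d : ℤ → Option Bool, ValidChoice a d ∧ b = psspmResult a d

/-- Reachability: reflexive transitive closure of a step relation. -/
def Reaches (step : (ℤ → ℕ) → (ℤ → ℕ) → Prop) : (ℤ → ℕ) → (ℤ → ℕ) → Prop :=
  Relation.ReflTransGen step

/-- Fixed point: no rule applies anywhere. -/
def IsFixed (c : ℤ → ℕ) : Prop :=
  ∀ i : ℤ, c i ≤ c (i + 1) + 1 ∧ c i ≤ c (i - 1) + 1

/-- Unimodal configuration: nondecreasing up to some index, nonincreasing after. -/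
def Unimodal (c : ℤ → ℕ) : Prop :=
  ∃ j : ℤ, (∀ i k : ℤ, i ≤ k → k ≤ j → c i ≤ c k) ∧
           (∀ i k : ℤ, j ≤ i → i ≤ k → c k ≤ c i)

/-- Strict lexicographic order, reading positions from left to right. -/
def lexLt (a b : ℤ → ℕ) : Prop :=
  ∃ i : ℤ, a i < b i ∧ ∀ k : ℤ, k < i → a k = b k

/-- Lexicographic order. -/
def lexLe (a b : ℤ → ℕ) : Prop := a = b ∨ lexLt a b

/-- `closeStar a b` (a ◁* b): the nonzero entries of `a - b`, read from left
to right, form a concatenation of pairs (−1 then +1), recorded by an ordered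
list of index pairs. -/
def closeStar (a b : ℤ → ℕ) : Prop :=
  ∃ l : List (ℤ × ℤ),
    (∀ p ∈ l, p.1 < p.2) ∧
    l.Chain' (fun p q => p.2 < q.1) ∧
    ∀ i : ℤ, (a i : ℤ) - (b i : ℤ) =
      (if i ∈ l.map Prod.snd then 1 else 0) - (if i ∈ l.map Prod.fst then 1 else 0)

/-- `closeRel a b` (a ◁ b): `a - b` is exactly −1 at some index `i` and +1 at
some index `j > i`, and 0 elsewhere. -/
def closeRel (a b : ℤ → ℕ) : Prop :=
  ∃ i j : ℤ, i < j ∧ ((a i : ℤ) = (b i : ℤ) - 1) ∧ (a j = b j + 1) ∧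
    ∀ k : ℤ, k ≠ i → k ≠ j → a k = b k

theorem left_right_choice_close (a : ℤ → ℕ) (huni : Unimodal a) (i : ℤ)
    (hL : appL a i) (hR : appR a i)
    (dL dR : ℤ → Option Bool)
    (hvL : ValidChoice a dL) (hvR : ValidChoice a dR)
    (hiL : dL i = some false) (hiR : dR i = some true)
    (hsame : ∀ j : ℤ, j ≠ i → dL j = dR j) :
    ((psspmResult a dR (i - 1) : ℤ) = (psspmResult a dL (i - 1) : ℤ) - 1 ∧
     psspmResult a dR (i + 1) = psspmResult a dL (i + 1) + 1 ∧
     (∀ j : ℤ, j ≠ i - 1 → j ≠ i + 1 → psspmResult a dR j = psspmResult a dL j)) ∧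
    closeStar (psspmResult a dR) (psspmResult a dL) := by
  have key1 : psspmResult a dL (i-1) = psspmResult a dR (i-1) + 1 := by
    have h1 : dL (i-1) = dR (i-1) := hsame _ (by omega)
    have h2 : dL (i-1-1) = dR (i-1-1) := hsame _ (by omega)
    have h3 : i - 1 + 1 = i := by ring
    simp only [psspmResult, h1, h2, h3, hiL, hiR]
    simp
  have key2 : psspmResult a dR (i+1) = psspmResult a dL (i+1) + 1 := by
    have h1 : dL (i+1) = dR (i+1) := hsame _ (by omega)
    have h2 : dL (i+1+1) = dR (i+1+1) := hsame _ (by omega)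
    have h3 : i + 1 - 1 = i := by ring
    simp only [psspmResult, h1, h2, h3, hiL, hiR]
    simp
    omega
  have key3 : ∀ j : ℤ, j ≠ i - 1 → j ≠ i + 1 → psspmResult a dR j = psspmResult a dL j := by
    intro j hj1 hj2
    by_cases hji : j = i
    · subst hji
      have h1 : dL (j-1) = dR (j-1) := hsame _ (by omega)
      have h2 : dL (j+1) = dR (j+1) := hsame _ (by omega)
      simp only [psspmResult, h1, h2, hiL, hiR]
      simp
    · have h0 : dL j = dR j := hsame _ hji
      have h1 : dL (j-1) = dR (j-1) := hsame _ (by omega)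
      have h2 : dL (j+1) = dR (j+1) := hsame _ (by omega)
      simp only [psspmResult, h0, h1, h2]
  have key1' : (psspmResult a dR (i - 1) : ℤ) = (psspmResult a dL (i - 1) : ℤ) - 1 := by
    rw [key1]; push_cast; ring
  refine ⟨⟨key1', key2, key3⟩, ⟨[(i-1, i+1)], ?_, ?_, ?_⟩⟩
  · intro p hp
    simp at hp
    subst hp
    simp
  · constructor
  · intro k
    simp only [List.map_cons, List.map_nil, List.mem_singleton]
    by_cases h1 : k = i - 1
    · subst h1
      rw [if_neg (by omega), if_pos rfl, key1']
      ring
    · by_cases h2 : k = i + 1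
      · subst h2
        rw [if_pos rfl, if_neg (by omega), key2]
        push_cast
        ring
      · rw [if_neg h2, if_neg h1, key3 k h1 h2]
        ring
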